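/- There is no s ∈ [0,1) such that p_𝒞(Φ_T(f), Φ_T(g)) ≤ s·p_𝒞(f,g) for all f, g ∈ 𝒞_{b,c}. That is, the Divide and Conquer functional Φ_T is never a contraction with respect to the partial metric p_𝒞 on 𝒞_{b,c}. -/

import Mathlib

open scoped NNReal ENNReal

/-- `ω_b = {bᵏ : k ∈ ℕ₊}`. -/
def omegaB (b : ℕ) : Set ℕ := {n | ∃ k : ℕ, 1 ≤ k ∧ n = b ^ k}

/-- Membership in `𝒞_{b,c}` (functions indexed from `1`; the value at `0` is irrelevant
and normalized to `⊤`): `f ∈ 𝒞`, `f(1) = c` and `f(n) = ∞` for `n ∉ ω_b`, `n > 1`. -/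
def memCbc (b : ℕ) (c : ℝ≥0∞) (f : ℕ → ℝ≥0∞) : Prop :=
  (∀ n, 1 ≤ n → 0 < f n) ∧
    (∑' n : ℕ, (2 : ℝ≥0∞)⁻¹ ^ (n + 1) * (f (n + 1))⁻¹) ≠ ⊤ ∧
    f 1 = c ∧ (∀ n, 2 ≤ n → n ∉ omegaB b → f n = ⊤)

/-- `p_𝒞(f,g) = Σ_{n=1}^∞ 2^{-n} max(1/f(n), 1/g(n))`. -/
noncomputable def pC (f g : ℕ → ℝ≥0∞) : ℝ≥0∞ :=
  ∑' n : ℕ, (2 : ℝ≥0∞)⁻¹ ^ (n + 1) * max (f (n + 1))⁻¹ (g (n + 1))⁻¹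

open Classical in
/-- The Divide and Conquer functional `Φ_T`. -/
noncomputable def PhiT (a b : ℕ) (c : ℝ≥0∞) (h : ℕ → ℝ≥0∞) (f : ℕ → ℝ≥0∞) :
    ℕ → ℝ≥0∞ := fun n =>
  if n = 1 then c else if n ∈ omegaB b then (a : ℝ≥0∞) * f (n / b) + h n else ⊤

/-- there is no `s ∈ [0,1)` such that
`p_𝒞(Φ_T(f), Φ_T(g)) ≤ s·p_𝒞(f,g)` for all `f, g ∈ 𝒞_{b,c}`. -/
theorem baire_stmt7 (a b : ℕ) (ha : 1 < a) (hb : 1 < b)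
    (c : ℝ≥0) (hc : 0 < c)
    (h : ℕ → ℝ≥0∞) (hh : ∀ n, 1 ≤ n → 0 < h n ∧ h n ≠ ⊤) :
    ¬ ∃ s : ℝ≥0, s < 1 ∧
      ∀ f g : ℕ → ℝ≥0∞, memCbc b (c : ℝ≥0∞) f → memCbc b (c : ℝ≥0∞) g →
        pC (PhiT a b (c : ℝ≥0∞) h f) (PhiT a b (c : ℝ≥0∞) h g) ≤ (s : ℝ≥0∞) * pC f g := by
  rintro ⟨s, hs1, hcontr⟩
  set f : ℕ → ℝ≥0∞ := fun n => if n = 1 then (c : ℝ≥0∞) else ⊤ with hf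
  have hmem : memCbc b (c : ℝ≥0∞) f := by
    refine ⟨?_, ?_, by simp [hf], ?_⟩
    · intro n hn
      by_cases hn1 : n = 1
      · simp [hf, hn1, hc]
      · simp [hf, hn1]
    · have : (∑' n : ℕ, (2 : ℝ≥0∞)⁻¹ ^ (n + 1) * (f (n + 1))⁻¹)
          = (2 : ℝ≥0∞)⁻¹ ^ (0 + 1) * (f (0 + 1))⁻¹ := by
        refine tsum_eq_single 0 ?_
        intro n hn
        have : n + 1 ≠ 1 := by omega
        simp [hf, this, hn]
      rw [this]
      simp only [hf, pow_one, if_pos rfl]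
      exact ENNReal.mul_ne_top (by simp) (ENNReal.inv_ne_top.mpr (by exact_mod_cast hc.ne'))
    · intro n hn _
      have : n ≠ 1 := by omega
      simp [hf, this]
  have hle := hcontr f f hmem hmem
  have hpcff : pC f f = 2⁻¹ * (c : ℝ≥0∞)⁻¹ := by
    unfold pC
    have : (∑' n : ℕ, (2 : ℝ≥0∞)⁻¹ ^ (n + 1) * max (f (n + 1))⁻¹ (f (n + 1))⁻¹)
        = (2 : ℝ≥0∞)⁻¹ ^ (0 + 1) * max (f (0 + 1))⁻¹ (f (0 + 1))⁻¹ := by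
      refine tsum_eq_single 0 ?_
      intro n hn
      have : n + 1 ≠ 1 := by omega
      simp [hf, this, hn]
    rw [this]
    simp [hf]
  have hlow : 2⁻¹ * (c : ℝ≥0∞)⁻¹ ≤
      pC (PhiT a b (c : ℝ≥0∞) h f) (PhiT a b (c : ℝ≥0∞) h f) := by
    have := ENNReal.le_tsum (f := fun n : ℕ => (2 : ℝ≥0∞)⁻¹ ^ (n + 1) *
      max ((PhiT a b (c : ℝ≥0∞) h f (n + 1))⁻¹) ((PhiT a b (c : ℝ≥0∞) h f (n + 1))⁻¹)) 0
    simpa [pC, PhiT] using this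
  set K : ℝ≥0∞ := 2⁻¹ * (c : ℝ≥0∞)⁻¹ with hK
  have hK0 : K ≠ 0 := by
    simp [hK]
  have hKtop : K ≠ ⊤ :=
    ENNReal.mul_ne_top (by simp) (ENNReal.inv_ne_top.mpr (by exact_mod_cast hc.ne'))
  have hfinal : K ≤ (s : ℝ≥0∞) * K := by
    calc K ≤ pC (PhiT a b (c : ℝ≥0∞) h f) (PhiT a b (c : ℝ≥0∞) h f) := hlow
    _ ≤ (s : ℝ≥0∞) * pC f f := hle
    _ = (s : ℝ≥0∞) * K := by rw [hpcff]
  have hlt : (s : ℝ≥0∞) * K < 1 * K :=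
    ENNReal.mul_lt_mul_left hK0 hKtop (by exact_mod_cast hs1)
  rw [one_mul] at hlt
  exact absurd (lt_of_le_of_lt hfinal hlt) (lt_irrefl K)
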